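/- Let d ≥ 3 and let Y = ‖x‖² Σ_{k=1}^d x^k ∂_{k+1} (indices mod d) be a vector field on ℝ^d. Then for each j, the triple iterated bracket satisfies [∂_j, [∂_j, [∂_j, Y]]] = 6 ∂_{j+1}. -/

import Mathlib

/-- Lie bracket of vector fields on ℝ^m: `[X,Y](x) = DY_x(X(x)) - DX_x(Y(x))`. -/
noncomputable def vfBracket {m : ℕ} (X Y : (Fin m → ℝ) → (Fin m → ℝ)) :
    (Fin m → ℝ) → (Fin m → ℝ) :=
  fun x => fderiv ℝ Y x (X x) - fderiv ℝ X x (Y x)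

/-- The `j`-th coordinate constant vector field `∂_j` on ℝ^m. -/
def coordField {m : ℕ} (j : Fin m) : (Fin m → ℝ) → (Fin m → ℝ) :=
  fun _ k => if k = j then 1 else 0

/-- the `l`-th coordinate projection as a continuous linear map. -/
noncomputable def prCLM {m : ℕ} (l : Fin m) : (Fin m → ℝ) →L[ℝ] ℝ :=
  ContinuousLinearMap.proj l

lemma hasFDerivAt_pr {m : ℕ} (l : Fin m) (x : Fin m → ℝ) :
    HasFDerivAt (fun y : Fin m → ℝ => y l) (prCLM l) x :=
  hasFDerivAt_apply (𝕜 := ℝ) l x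

@[simp] lemma prCLM_apply {m : ℕ} (l : Fin m) (v : Fin m → ℝ) : prCLM l v = v l := rfl

open ContinuousLinearMap in
lemma bracket_key {m : ℕ} (j : Fin m) (Z : (Fin m → ℝ) → Fin m → ℝ) (x : Fin m → ℝ)
    (L : Fin m → (Fin m → ℝ) →L[ℝ] ℝ)
    (h : ∀ k, HasFDerivAt (fun y => Z y k) (L k) x) :
    vfBracket (coordField j) Z x = fun k => L k (Pi.single j 1) := by
  have hs : coordField j x = Pi.single j 1 := by
    funext k; simp [coordField, Pi.single_apply]
  have hZ : HasFDerivAt Z (ContinuousLinearMap.pi L) x := hasFDerivAt_pi.2 h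
  have hc : (fderiv ℝ (coordField j) x : (Fin m → ℝ) →L[ℝ] (Fin m → ℝ)) = 0 := by
    have : coordField j = fun _ : Fin m → ℝ => (fun k => if k = j then (1:ℝ) else 0) := rfl
    rw [this, fderiv_fun_const]; rfl
  funext k
  simp [vfBracket, hZ.fderiv, hc, hs]

/-- In dimension `d + 3 ≥ 3`, for the cubic vector field
`Y = ‖x‖² Σ_k x^k ∂_{k+1}` (indices mod the dimension), the triple bracket satisfies
`[∂_j, [∂_j, [∂_j, Y]]] = 6 ∂_{j+1}`. -/
theorem triple_bracket_cubic_field (d : ℕ) (j : Fin (d + 3)) :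
    vfBracket (coordField j) (vfBracket (coordField j) (vfBracket (coordField j)
        (fun x k => (∑ l, x l ^ 2) * x (k - 1))))
      = fun _ k => if k = j + 1 then (6 : ℝ) else 0 := by
  classical
  have hsub : ∀ k : Fin (d+3), (k - 1 = j) ↔ (k = j + 1) := fun k => sub_eq_iff_eq_add
  have hsq : ∀ (x : Fin (d+3) → ℝ) (l : Fin (d+3)),
      HasFDerivAt (fun y : Fin (d+3) → ℝ => y l ^ 2) ((2 * x l) • prCLM l) x := by
    intro x l
    have h := (hasFDerivAt_pr l x).fun_mul (hasFDerivAt_pr l x)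
    simpa [pow_two, two_mul, add_smul] using h
  have hS : ∀ x : Fin (d+3) → ℝ,
      HasFDerivAt (fun y : Fin (d+3) → ℝ => ∑ l, y l ^ 2)
        (∑ l, (2 * x l) • prCLM l) x := fun x => HasFDerivAt.fun_sum (fun l _ => hsq x l)
  have step1 : vfBracket (coordField j) (fun x k => (∑ l, x l ^ 2) * x (k - 1))
      = fun x k => (∑ l, x l ^ 2) * (if k = j + 1 then 1 else 0) + 2 * x j * x (k - 1) := by
    funext x
    rw [bracket_key j _ x _ (fun k => (hS x).fun_mul (hasFDerivAt_pr (k - 1) x))]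
    funext k
    simp [Pi.single_apply, hsub k, mul_comm]
  rw [step1]
  have step2 : vfBracket (coordField j)
      (fun x k => (∑ l, x l ^ 2) * (if k = j + 1 then 1 else 0) + 2 * x j * x (k - 1))
      = fun x k => 2 * x (k - 1) + 4 * x j * (if k = j + 1 then 1 else 0) := by
    funext x
    rw [bracket_key j _ x _
      (fun k => ((hS x).mul_const _).fun_add
        (((hasFDerivAt_pr j x).const_mul 2).fun_mul (hasFDerivAt_pr (k - 1) x)))]
    funext k
    simp [ContinuousLinearMap.sum_apply, ContinuousLinearMap.smul_apply, ContinuousLinearMap.add_apply, ContinuousLinearMap.zero_apply, Pi.single_apply,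
      smul_eq_mul, mul_ite, mul_one, mul_zero, Finset.sum_ite_eq, Finset.sum_ite_eq', hsub k, -ite_smul]
    split_ifs <;> ring
  rw [step2]
  have step3 : vfBracket (coordField j)
      (fun x k => 2 * x (k - 1) + 4 * x j * (if k = j + 1 then 1 else 0))
      = fun _ k => if k = j + 1 then (6:ℝ) else 0 := by
    funext x
    rw [bracket_key j _ x _
      (fun k => ((hasFDerivAt_pr (k-1) x).const_mul 2).fun_add
        (((hasFDerivAt_pr j x).const_mul 4).mul_const _))]
    funext k
    simp [ContinuousLinearMap.sum_apply, ContinuousLinearMap.smul_apply, ContinuousLinearMap.add_apply, ContinuousLinearMap.zero_apply, Pi.single_apply,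
      smul_eq_mul, mul_ite, mul_one, mul_zero, Finset.sum_ite_eq, Finset.sum_ite_eq', hsub k, -ite_smul]
    split_ifs <;> ring
  rw [step3]
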